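/- arXiv:1404.1035 — 4 statements merged into one kernel-verified Lean document; each statement's English description precedes it below -/
import Mathlib

section
/- If h ∈ C^k(𝕋) for some k ∈ ℕ, then the Toeplitz operator T_h is of class C^k with respect to the position operator X on ℓ²(ℕ), and for all 0 ≤ j ≤ k the iterated commutator satisfies ad_X^j T_h = (−i)^j T_{h^{(j)}}, where h^{(j)} is the j-th derivative of h. -/
open scoped InnerProductSpace
open Complex

noncomputable section

/-- The `n`-th Fourier coefficient of a `2π`-periodic function `f : ℝ → ℂ`. -/
def fcoef (f : ℝ → ℂ) (n : ℤ) : ℂ :=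
  (1 / (2 * Real.pi)) • ∫ θ in (0:ℝ)..(2 * Real.pi), Complex.exp (-Complex.I * n * θ) * f θ

lemma periodic_deriv'' {f : ℝ → ℝ} {c : ℝ} (hf : Function.Periodic f c) :
    Function.Periodic (deriv f) c := by
  intro x
  have h1 : (fun y => f (y + c)) = f := funext hf
  rw [← deriv_comp_add_const, h1]

lemma periodic_iteratedDeriv' {f : ℝ → ℝ} {c : ℝ} (hf : Function.Periodic f c) (n : ℕ) :
    Function.Periodic (iteratedDeriv n f) c := by
  induction n with
  | zero => simpa using hf
  | succ n ih => rw [iteratedDeriv_succ]; exact periodic_deriv'' ih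

set_option maxHeartbeats 1000000 in
lemma fcoef_hasDeriv (g g' : ℝ → ℂ) (hg : ∀ x, HasDerivAt g (g' x) x)
    (hc : Continuous g') (hp : g (2 * Real.pi) = g 0) (m : ℤ) :
    fcoef g' m = Complex.I * m * fcoef g m := by
  have hgc : Continuous g := by
    apply continuous_iff_continuousAt.mpr
    exact fun x => (hg x).continuousAt
  set c : ℂ := -Complex.I * m with hcm
  have hu : ∀ x : ℝ, HasDerivAt (fun θ : ℝ => Complex.exp (c * θ)) (c * Complex.exp (c * x)) x := by
    intro x
    have h1 : HasDerivAt (fun θ : ℝ => (c * θ : ℂ)) c x := by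
      simpa using (Complex.ofRealCLM.hasDerivAt (x := x)).const_mul c
    simpa [mul_comm] using h1.cexp
  have huc : Continuous fun θ : ℝ => c * Complex.exp (c * θ) := continuous_const.mul (Complex.continuous_exp.comp (continuous_const.mul Complex.continuous_ofReal))
  have key : ∫ θ in (0:ℝ)..(2 * Real.pi), Complex.exp (c * θ) * g' θ
      = Complex.exp (c * ((2 * Real.pi : ℝ) : ℂ)) * g (2 * Real.pi) - Complex.exp (c * ((0:ℝ) : ℂ)) * g 0
        - ∫ θ in (0:ℝ)..(2 * Real.pi), (c * Complex.exp (c * θ)) * g θ :=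
    intervalIntegral.integral_mul_deriv_eq_deriv_mul (fun x _ => hu x) (fun x _ => hg x)
      (huc.intervalIntegrable _ _) (hc.intervalIntegrable _ _)
  have hexp1 : Complex.exp (c * ((2 * Real.pi : ℝ) : ℂ)) = 1 := by
    have h2 : c * ((2 * Real.pi : ℝ) : ℂ) = (-m : ℤ) * (2 * (Real.pi : ℂ) * Complex.I) := by
      rw [hcm]; push_cast; ring
    rw [h2, Complex.exp_int_mul_two_pi_mul_I]
  have hpull : ∫ θ in (0:ℝ)..(2 * Real.pi), (c * Complex.exp (c * θ)) * g θ
      = c * ∫ θ in (0:ℝ)..(2 * Real.pi), Complex.exp (c * θ) * g θ := by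
    simp_rw [mul_assoc]
    exact intervalIntegral.integral_const_mul _ _
  rw [hexp1, hpull, hp] at key
  simp only [Complex.ofReal_zero, mul_zero, Complex.exp_zero, one_mul] at key
  have key2 : ∫ θ in (0:ℝ)..(2 * Real.pi), Complex.exp (c * θ) * g' θ
      = Complex.I * m * ∫ θ in (0:ℝ)..(2 * Real.pi), Complex.exp (c * θ) * g θ := by
    rw [key, hcm]; ring
  show (1 / (2 * Real.pi)) • ∫ θ in (0:ℝ)..(2 * Real.pi), Complex.exp (-Complex.I * m * θ) * g' θ = _
  have harg : ∀ θ : ℝ, -Complex.I * m * θ = c * θ := fun θ => by rw [hcm]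
  simp_rw [harg]
  rw [key2]
  unfold fcoef
  simp_rw [harg]
  rw [Complex.real_smul, Complex.real_smul]
  ring
variable {E : Type*} [NormedAddCommGroup E] [InnerProductSpace ℂ E] [CompleteSpace E]

/-- `e` is the canonical orthonormal (Hilbert) basis of `ℓ²(ℕ)`, abstractly:
an orthonormal family with dense span. -/
def IsONBasis (e : ℕ → E) : Prop :=
  Orthonormal ℂ e ∧ (Submodule.span ℂ (Set.range e)).topologicalClosure = ⊤

/-- `T` is the Toeplitz operator with symbol `f`: `⟪e n, T (e k)⟫ = f̂(n−k)`. -/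
def IsToeplitz (e : ℕ → E) (f : ℝ → ℂ) (T : E →L[ℂ] E) : Prop :=
  ∀ n k : ℕ, ⟪e n, T (e k)⟫_ℂ = fcoef f ((n : ℤ) - k)

/-- `T` is the Hankel operator with symbol `f`: `⟪e n, T (e k)⟫ = f̂(n+k+1)`
(0-based indexing of the paper's `f̂_{n+k-1}`, `n, k ≥ 1`). -/
def IsHankel (e : ℕ → E) (f : ℝ → ℂ) (T : E →L[ℂ] E) : Prop :=
  ∀ n k : ℕ, ⟪e n, T (e k)⟫_ℂ = fcoef f ((n : ℤ) + k + 1)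

/-- `X` is the (self-adjoint) position operator: `X e_n = (n+1) e_n` (0-based). -/
def IsPosOp (e : ℕ → E) (X : E →ₗ.[ℂ] E) : Prop :=
  X.adjoint = X ∧ ∀ q : ℕ, ∃ hq : e q ∈ X.domain, X ⟨e q, hq⟩ = ((q : ℂ) + 1) • e q

/-- `A` is the self-adjoint operator `A_g`, the closure of `½(T_g X + X T_g)`;
being essentially self-adjoint, it is the unique self-adjoint operator with
matrix elements `((p+q+2)/2)·ĝ(p−q)` on the canonical basis (0-based). -/
def IsAg (e : ℕ → E) (g : ℝ → ℂ) (A : E →ₗ.[ℂ] E) : Prop :=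
  A.adjoint = A ∧ ∀ q : ℕ, ∃ hq : e q ∈ A.domain, ∀ p : ℕ,
    ⟪e p, A ⟨e q, hq⟩⟫_ℂ = (((p : ℂ) + q + 2) / 2) * fcoef g ((p : ℤ) - q)

/-- `C = ad_A B`: the commutator form of `A` and `B` on `D(A) × D(A)` is
represented by the bounded operator `C`; in particular `B ∈ C¹(A)`. -/
def CommutatorOf (A : E →ₗ.[ℂ] E) (B C : E →L[ℂ] E) : Prop :=
  ∀ φ ψ : A.domain, ⟪A φ, B (ψ : E)⟫_ℂ - ⟪(φ : E), B (A ψ)⟫_ℂ = ⟪(φ : E), C (ψ : E)⟫_ℂ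

set_option maxHeartbeats 1000000 in
/-- If `h ∈ C^k(𝕋)` then `T_h ∈ C^k(X)` and
`ad_X^j T_h = (−i)^j T_{h^{(j)}}` for all `j ≤ k`. -/
theorem stmt_2 (e : ℕ → E) (he : IsONBasis e)
    (k : ℕ) (h : ℝ → ℝ) (hsm : ContDiff ℝ k h) (hper : Function.Periodic h (2 * Real.pi))
    (X : E →ₗ.[ℂ] E) (hX : IsPosOp e X)
    (Th : ℕ → E →L[ℂ] E)
    (hTh : ∀ j ≤ k, IsToeplitz e (fun x => Complex.ofReal (iteratedDeriv j h x)) (Th j)) :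
    ∀ j < k, CommutatorOf X ((-Complex.I) ^ j • Th j) ((-Complex.I) ^ (j + 1) • Th (j + 1)) := by
  obtain ⟨hon, hsp⟩ := he
  obtain ⟨hadj, hXe⟩ := hX
  -- Hilbert basis
  obtain ⟨b, hbe⟩ : ∃ b : HilbertBasis ℕ ℂ E, ⇑b = e :=
    ⟨HilbertBasis.mk hon hsp.ge, HilbertBasis.coe_mk _ _⟩
  have hbi : ∀ i, b i = e i := fun i => congrFun hbe i
  -- density of the domain
  have hdense : Dense (X.domain : Set E) := by
    rw [Submodule.dense_iff_topologicalClosure_eq_top]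
    have h1 : Submodule.span ℂ (Set.range e) ≤ X.domain :=
      Submodule.span_le.mpr (by rintro _ ⟨q, rfl⟩; exact (hXe q).choose)
    have h2 := Submodule.topologicalClosure_mono h1
    rw [hsp] at h2
    exact top_le_iff.mp h2
  have hfa : X.IsFormalAdjoint X := by
    have h3 := LinearPMap.adjoint_isFormalAdjoint (T := X) hdense
    rwa [hadj] at h3
  -- matrix elements of X
  have hXr : ∀ (φ : X.domain) (q : ℕ), ⟪(X φ : E), e q⟫_ℂ = ((q : ℂ) + 1) * ⟪(φ : E), e q⟫_ℂ := by
    intro φ q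
    obtain ⟨hq, hXq⟩ := hXe q
    have h4 := hfa φ ⟨e q, hq⟩
    rw [hXq, inner_smul_right] at h4
    exact h4
  have hXl : ∀ (ψ : X.domain) (q : ℕ), ⟪e q, (X ψ : E)⟫_ℂ = ((q : ℂ) + 1) * ⟪e q, (ψ : E)⟫_ℂ := by
    intro ψ q
    obtain ⟨hq, hXq⟩ := hXe q
    have h4 := hfa ⟨e q, hq⟩ ψ
    rw [hXq, inner_smul_left] at h4
    rw [← h4]
    congr 1
    simp
  -- basis expansion of ⟪e n, T y⟫
  have hrepr : ∀ y : E, HasSum (fun q => ⟪e q, y⟫_ℂ • e q) y := by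
    intro y
    have h5 := b.hasSum_repr y
    simp only [HilbertBasis.repr_apply_apply] at h5
    simp only [hbi] at h5
    exact h5
  have hexp : ∀ (T : E →L[ℂ] E) (n : ℕ) (y : E),
      HasSum (fun q => ⟪e q, y⟫_ℂ * ⟪e n, T (e q)⟫_ℂ) ⟪e n, T y⟫_ℂ := by
    intro T n y
    have h6 := ((hrepr y).mapL T).mapL (innerSL ℂ (e n))
    simpa [inner_smul_right] using h6
  intro j hj
  -- Fourier coefficient identity
  have hfc : ∀ m : ℤ, fcoef (fun x => ((iteratedDeriv (j+1) h x : ℝ) : ℂ)) m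
      = Complex.I * m * fcoef (fun x => ((iteratedDeriv j h x : ℝ) : ℂ)) m := by
    intro m
    apply fcoef_hasDeriv
    · intro x
      have hd : HasDerivAt (iteratedDeriv j h) (iteratedDeriv (j+1) h x) x := by
        rw [iteratedDeriv_succ]
        exact ((hsm.differentiable_iteratedDeriv j (by exact_mod_cast hj)) x).hasDerivAt
      exact hd.ofReal_comp
    · exact Complex.continuous_ofReal.comp
        (hsm.continuous_iteratedDeriv (j+1) (by exact_mod_cast hj))
    · have hp := periodic_iteratedDeriv' hper j
      have := hp 0
      rw [zero_add] at this
      exact_mod_cast congrArg Complex.ofReal this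
  intro φ ψ
  set B := ((-Complex.I) ^ j • Th j) with hB
  set C := ((-Complex.I) ^ (j+1) • Th (j+1)) with hC
  have hBapp : ∀ n q : ℕ, ⟪e n, B (e q)⟫_ℂ
      = (-Complex.I) ^ j * fcoef (fun x => ((iteratedDeriv j h x : ℝ) : ℂ)) ((n : ℤ) - q) :=
    fun n q => by
      simp only [hB, ContinuousLinearMap.smul_apply, inner_smul_right, hTh j hj.le n q]
  have hCapp : ∀ n q : ℕ, ⟪e n, C (e q)⟫_ℂ
      = (-Complex.I) ^ (j+1) * fcoef (fun x => ((iteratedDeriv (j+1) h x : ℝ) : ℂ)) ((n : ℤ) - q) :=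
    fun n q => by
      simp only [hC, ContinuousLinearMap.smul_apply, inner_smul_right, hTh (j+1) hj n q]
  have mat : ∀ n q : ℕ, ⟪e n, C (e q)⟫_ℂ = ((n : ℂ) - q) * ⟪e n, B (e q)⟫_ℂ := by
    intro n q
    rw [hBapp, hCapp, hfc ((n : ℤ) - q), pow_succ]
    have h1 : (-Complex.I) * Complex.I = 1 := by simp [Complex.I_mul_I]
    push_cast
    linear_combination ((-Complex.I) ^ j *
      fcoef (fun x => ((iteratedDeriv j h x : ℝ) : ℂ)) ((n : ℤ) - q) * ((n : ℂ) - q)) * h1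
  -- inner identity for each n
  have inner_n : ∀ n : ℕ, ((n : ℂ) + 1) * ⟪e n, B (ψ : E)⟫_ℂ - ⟪e n, B (X ψ)⟫_ℂ
      = ⟪e n, C (ψ : E)⟫_ℂ := by
    intro n
    have S1 := (hexp B n (ψ : E)).mul_left ((n : ℂ) + 1)
    have S2 := hexp B n (X ψ)
    have S3 := hexp C n (ψ : E)
    have S2' : HasSum (fun q : ℕ => (((q : ℂ) + 1) * ⟪e q, (ψ : E)⟫_ℂ) * ⟪e n, B (e q)⟫_ℂ)
        ⟪e n, B (X ψ)⟫_ℂ := by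
      have hfun : (fun q : ℕ => ⟪e q, (X ψ : E)⟫_ℂ * ⟪e n, B (e q)⟫_ℂ)
          = fun q : ℕ => (((q : ℂ) + 1) * ⟪e q, (ψ : E)⟫_ℂ) * ⟪e n, B (e q)⟫_ℂ := by
        funext q; rw [hXl ψ q]
      rw [← hfun]; exact S2
    have hdiff := S1.sub S2'
    have hfun2 : (fun q : ℕ => ((n : ℂ) + 1) * (⟪e q, (ψ : E)⟫_ℂ * ⟪e n, B (e q)⟫_ℂ)
          - (((q : ℂ) + 1) * ⟪e q, (ψ : E)⟫_ℂ) * ⟪e n, B (e q)⟫_ℂ)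
        = fun q : ℕ => ⟪e q, (ψ : E)⟫_ℂ * ⟪e n, C (e q)⟫_ℂ := by
      funext q
      rw [mat n q]
      ring
    rw [hfun2] at hdiff
    exact hdiff.unique S3
  -- final assembly
  have O1 := b.hasSum_inner_mul_inner (X φ : E) (B (ψ : E))
  have O2 := b.hasSum_inner_mul_inner (φ : E) (B (X ψ))
  have O3 := b.hasSum_inner_mul_inner (φ : E) (C (ψ : E))
  simp only [hbi] at O1 O2 O3
  have Od := O1.sub O2
  have hfun3 : (fun n : ℕ => ⟪(X φ : E), e n⟫_ℂ * ⟪e n, B (ψ : E)⟫_ℂ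
        - ⟪(φ : E), e n⟫_ℂ * ⟪e n, B (X ψ)⟫_ℂ)
      = fun n : ℕ => ⟪(φ : E), e n⟫_ℂ * ⟪e n, C (ψ : E)⟫_ℂ := by
    funext n
    rw [hXr φ n, ← inner_n n]
    ring
  rw [hfun3] at Od
  exact Od.unique O3
end
end

section
/- Let f ∈ C³(𝕋) and g ∈ C²(𝕋) be real-valued. Then the sesquilinear form G_+(φ,ψ) = ⟨φ, X H_f* H_g X ψ⟩ defined on the span of the canonical basis of ℓ²(ℕ) is continuous for the topology induced by ℓ²(ℕ) × ℓ²(ℕ), hence the operator X H_f* H_g X extends to a bounded operator on ℓ²(ℕ). -/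
open scoped InnerProductSpace
open Complex

noncomputable section

variable {E : Type*} [NormedAddCommGroup E] [InnerProductSpace ℂ E] [CompleteSpace E]

section AuxStmt7

open scoped ENNReal

set_option linter.unusedSectionVars false

lemma periodic_deriv' {F : ℝ → ℂ} {T : ℝ} (h : Function.Periodic F T) :
    Function.Periodic (deriv F) T := by
  intro x
  have h2 : (fun y : ℝ => F (y + T)) = F := funext fun y => h y
  rw [← deriv_comp_add_const F T x, h2]

lemma fcoef_deriv (F : ℝ → ℂ) (hd : Differentiable ℝ F) (hc : Continuous (deriv F))
    (hper : Function.Periodic F (2 * Real.pi)) (m : ℤ) :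
    fcoef (deriv F) m = (Complex.I * m) * fcoef F m := by
  have hFc : Continuous F := hd.continuous
  have hkey : ∀ x ∈ Set.uIcc (0:ℝ) (2*Real.pi),
      HasDerivAt (fun θ : ℝ => Complex.exp (-Complex.I * m * θ) * F θ)
        (Complex.exp (-Complex.I * m * x) * (-Complex.I * m) * F x
          + Complex.exp (-Complex.I * m * x) * deriv F x) x := by
    intro x _
    have h0 : HasDerivAt (fun θ : ℝ => ((θ : ℂ))) 1 x := by
      exact Complex.ofRealCLM.hasDerivAt (x := x)
    have h1 : HasDerivAt (fun θ : ℝ => -Complex.I * m * (θ:ℂ)) (-Complex.I * m) x := by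
      simpa using h0.const_mul (-Complex.I * m)
    have hexp : HasDerivAt (fun θ : ℝ => Complex.exp (-Complex.I * m * θ))
        (Complex.exp (-Complex.I * m * x) * (-Complex.I * m)) x := h1.cexp
    exact hexp.mul (hd x).hasDerivAt
  have hcont1 : Continuous fun x : ℝ => Complex.exp (-Complex.I * m * x) * (-Complex.I * m) * F x := by
    fun_prop
  have hcont2 : Continuous fun x : ℝ => Complex.exp (-Complex.I * m * x) * deriv F x := by
    fun_prop
  have heq := intervalIntegral.integral_eq_sub_of_hasDerivAt hkey
    ((hcont1.add hcont2).intervalIntegrable _ _)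
  have hexp2pi : Complex.exp (-Complex.I * m * ((2*Real.pi : ℝ):ℂ)) = 1 := by
    have h3 : -Complex.I * m * ((2*Real.pi : ℝ):ℂ) = ((-m : ℤ) : ℂ) * (2 * Real.pi * Complex.I) := by
      push_cast; ring
    rw [h3, Complex.exp_int_mul_two_pi_mul_I]
  have hF2pi : F (2*Real.pi) = F 0 := by simpa using hper 0
  rw [intervalIntegral.integral_add (hcont1.intervalIntegrable _ _)
    (hcont2.intervalIntegrable _ _)] at heq
  have hre : (∫ θ in (0:ℝ)..(2*Real.pi), Complex.exp (-Complex.I * m * θ) * (-Complex.I * m) * F θ)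
      = (-Complex.I * m) * ∫ θ in (0:ℝ)..(2*Real.pi), Complex.exp (-Complex.I * m * θ) * F θ := by
    rw [← intervalIntegral.integral_const_mul]
    congr 1; funext θ; ring
  rw [hre, hexp2pi, hF2pi] at heq
  simp only [Complex.ofReal_zero, mul_zero, Complex.exp_zero, one_mul] at heq
  have hI : (∫ θ in (0:ℝ)..(2*Real.pi), Complex.exp (-Complex.I * m * θ) * deriv F θ)
      = (Complex.I * m) * ∫ θ in (0:ℝ)..(2*Real.pi), Complex.exp (-Complex.I * m * θ) * F θ := by
    have := heq
    linear_combination heq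
  unfold fcoef
  rw [hI]
  rw [Complex.real_smul, Complex.real_smul]
  ring

lemma fcoef_bound (F : ℝ → ℂ) (hc : Continuous F) :
    ∃ M : ℝ, 0 ≤ M ∧ ∀ m : ℤ, ‖fcoef F m‖ ≤ M := by
  obtain ⟨C, hC⟩ := (isCompact_Icc (a := (0:ℝ)) (b := 2*Real.pi)).exists_bound_of_continuousOn
    hc.continuousOn
  refine ⟨max C 0, le_max_right _ _, fun m => ?_⟩
  have hpi : (0:ℝ) < 2 * Real.pi := by positivity
  have hnorm : ∀ x ∈ Set.uIoc (0:ℝ) (2*Real.pi),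
      ‖Complex.exp (-Complex.I * m * x) * F x‖ ≤ max C 0 := by
    intro x hx
    rw [Set.uIoc_of_le hpi.le] at hx
    have hx' : x ∈ Set.Icc (0:ℝ) (2*Real.pi) := ⟨hx.1.le, hx.2⟩
    have h1 : ‖Complex.exp (-Complex.I * m * x)‖ = 1 := by
      rw [Complex.norm_exp]
      have : (-Complex.I * m * x).re = 0 := by simp
      rw [this, Real.exp_zero]
    rw [norm_mul, h1, one_mul]
    exact le_trans (hC x hx') (le_max_left _ _)
  have hbound := intervalIntegral.norm_integral_le_of_norm_le_const hnorm
  unfold fcoef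
  rw [norm_smul]
  have h2 : ‖(1 / (2 * Real.pi) : ℝ)‖ = 1/(2*Real.pi) := by
    rw [Real.norm_eq_abs, abs_of_pos (by positivity)]
  rw [h2]
  calc 1/(2*Real.pi) * ‖∫ θ in (0:ℝ)..(2*Real.pi), Complex.exp (-Complex.I * m * θ) * F θ‖
      ≤ 1/(2*Real.pi) * (max C 0 * |2*Real.pi - 0|) := by
        apply mul_le_mul_of_nonneg_left hbound (by positivity)
    _ = max C 0 := by
        rw [sub_zero, abs_of_pos hpi]
        field_simp

lemma fcoef_decay (k : ℕ) : ∀ (F : ℝ → ℂ), ContDiff ℝ k F →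
    Function.Periodic F (2 * Real.pi) →
    ∃ M : ℝ, 0 ≤ M ∧ ∀ m : ℕ, ‖fcoef F ((m:ℤ)+1)‖ * ((m:ℝ)+1)^k ≤ M := by
  induction k with
  | zero =>
    intro F hk _
    obtain ⟨M, hM0, hM⟩ := fcoef_bound F hk.continuous
    exact ⟨M, hM0, fun m => by simpa using hM ((m:ℤ)+1)⟩
  | succ k ih =>
    intro F hk hper
    have hk' : ContDiff ℝ ((k:WithTop ℕ∞) + 1) F := by exact_mod_cast hk
    have hd : Differentiable ℝ F := (contDiff_succ_iff_deriv.mp hk').1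
    have hder : ContDiff ℝ (k:WithTop ℕ∞) (deriv F) := (contDiff_succ_iff_deriv.mp hk').2.2
    obtain ⟨M, hM0, hM⟩ := ih (deriv F) (by exact_mod_cast hder) (periodic_deriv' hper)
    refine ⟨M, hM0, fun m => ?_⟩
    have hrel := fcoef_deriv F hd hder.continuous hper ((m:ℤ)+1)
    have hnn : ‖fcoef (deriv F) ((m:ℤ)+1)‖ = ((m:ℝ)+1) * ‖fcoef F ((m:ℤ)+1)‖ := by
      rw [hrel, norm_mul, norm_mul, Complex.norm_I, one_mul]
      congr 1
      rw [show (((m:ℤ)+1 : ℤ) : ℂ) = ((m:ℝ)+1 : ℝ) by push_cast; ring]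
      rw [Complex.norm_real, Real.norm_eq_abs, abs_of_pos (by positivity)]
    calc ‖fcoef F ((m:ℤ)+1)‖ * ((m:ℝ)+1)^(k+1)
        = (((m:ℝ)+1) * ‖fcoef F ((m:ℤ)+1)‖) * ((m:ℝ)+1)^k := by ring
      _ = ‖fcoef (deriv F) ((m:ℤ)+1)‖ * ((m:ℝ)+1)^k := by rw [hnn]
      _ ≤ M := hM m

lemma summable_inv_sq_shift (n : ℕ) :
    Summable (fun q : ℕ => 1/((n:ℝ)+q+1)^2) := by
  have h0 : Summable (fun m : ℕ => 1/(m:ℝ)^2) :=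
    Real.summable_one_div_nat_pow.mpr one_lt_two
  have h1 := (summable_nat_add_iff (f := fun m : ℕ => 1/(m:ℝ)^2) (n+1)).mpr h0
  refine h1.congr fun q => ?_
  push_cast
  ring

lemma sum_range_inv_sq_le (n : ℕ) (N : ℕ) :
    ∑ q ∈ Finset.range N, 1/((n:ℝ)+q+1)^2 ≤ 2/((n:ℝ)+1) - 2/((n:ℝ)+N+1) := by
  induction N with
  | zero => simp
  | succ N ihN =>
    rw [Finset.sum_range_succ]
    have key : 1/((n:ℝ)+N+1)^2 ≤ 2/((n:ℝ)+N+1) - 2/((n:ℝ)+(N+1)+1) := by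
      set x : ℝ := (n:ℝ) + N + 1 with hxdef
      have hx0 : 0 < x := by positivity
      have hx : (1:ℝ) ≤ x := by
        have : (0:ℝ) ≤ (n:ℝ) + N := by positivity
        simp only [hxdef]; linarith
      push_cast
      have h2 : (n:ℝ)+((N:ℝ)+1)+1 = x + 1 := by rw [hxdef]; ring
      rw [h2]
      rw [div_sub_div _ _ (ne_of_gt hx0) (by positivity : x + 1 ≠ 0)]
      rw [div_le_div_iff₀ (by positivity) (by positivity)]
      nlinarith
    push_cast
    push_cast at ihN key
    linarith

lemma tsum_inv_sq_le (n : ℕ) :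
    ∑' q : ℕ, 1/((n:ℝ)+q+1)^2 ≤ 2/((n:ℝ)+1) := by
  apply Real.tsum_le_of_sum_range_le (fun q => by positivity)
  intro N
  have h1 := sum_range_inv_sq_le n N
  have h2 : 0 ≤ 2/((n:ℝ)+N+1) := by positivity
  linarith

lemma vec_of_coords (b : HilbertBasis ℕ ℂ E) (c : ℕ → ℂ) (C : ℝ) (hC : 0 ≤ C)
    (hsum : Summable (fun p : ℕ => ‖c p‖^(2:ℕ)))
    (hle : ∑' (p : ℕ), ‖c p‖^(2:ℕ) ≤ C^2) :
    ∃ v : E, ‖v‖ ≤ C ∧ ∀ p : ℕ, ⟪b p, v⟫_ℂ = c p := by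
  have htR : (2 : ℝ≥0∞).toReal = 2 := by simp
  have hmem : Memℓp c 2 := by
    apply memℓp_gen
    rw [htR]
    exact hsum.congr fun p => by
      rw [show ((2:ℝ) = ((2:ℕ):ℝ)) by norm_num, Real.rpow_natCast]
  set x : lp (fun _ : ℕ => ℂ) 2 := ⟨c, hmem⟩ with hx
  refine ⟨b.repr.symm x, ?_, ?_⟩
  · rw [LinearIsometryEquiv.norm_map]
    apply lp.norm_le_of_tsum_le (by rw [htR]; norm_num) hC
    rw [htR]
    calc ∑' p, ‖x p‖ ^ (2:ℝ) = ∑' p, ‖c p‖^(2:ℕ) := by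
          apply tsum_congr; intro p
          rw [show ((2:ℝ) = ((2:ℕ):ℝ)) by norm_num, Real.rpow_natCast]
      _ ≤ C^2 := hle
      _ = C ^ (2:ℝ) := by rw [show ((2:ℝ) = ((2:ℕ):ℝ)) by norm_num, Real.rpow_natCast]
  · intro p
    rw [← b.repr_apply_apply, LinearIsometryEquiv.apply_symm_apply]

lemma rank_one_piece (b : HilbertBasis ℕ ℂ E) (F G : ℝ → ℂ) (Mf Mg : ℝ)
    (hMf0 : 0 ≤ Mf) (hMg0 : 0 ≤ Mg)
    (hfd : ∀ n p : ℕ, ‖fcoef F ((n:ℤ)+p+1)‖ ≤ Mf / ((n:ℝ)+p+1)^3)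
    (hgd : ∀ n q : ℕ, ‖fcoef G ((n:ℤ)+q+1)‖ ≤ Mg / ((n:ℝ)+q+1)^2)
    (n : ℕ) :
    ∃ Rn : E →L[ℂ] E, ‖Rn‖ ≤ 2*Mf*Mg / ((n:ℝ)+1)^2 ∧
      ∀ p q : ℕ, ⟪b p, Rn (b q)⟫_ℂ =
        (((q:ℂ)+1) * fcoef G ((n:ℤ)+q+1)) * (((p:ℂ)+1) * (starRingEnd ℂ) (fcoef F ((n:ℤ)+p+1))) := by
  have hn1 : (0:ℝ) < (n:ℝ)+1 := by positivity
  -- coefficients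
  set cu : ℕ → ℂ := fun p => ((p:ℂ)+1) * (starRingEnd ℂ) (fcoef F ((n:ℤ)+p+1)) with hcu_def
  set cw : ℕ → ℂ := fun q => (starRingEnd ℂ) (((q:ℂ)+1) * fcoef G ((n:ℤ)+q+1)) with hcw_def
  have hnat : ∀ p : ℕ, ‖((p:ℂ)+1)‖ = (p:ℝ)+1 := by
    intro p
    rw [show ((p:ℂ)+1) = (((p:ℝ)+1 : ℝ) : ℂ) by push_cast; ring, Complex.norm_real,
      Real.norm_eq_abs, abs_of_pos (by positivity)]
  -- norm bounds on coefficients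
  have hcu_bd : ∀ p : ℕ, ‖cu p‖ ≤ Mf / ((n:ℝ)+p+1)^2 := by
    intro p
    have hx : (0:ℝ) < (n:ℝ)+p+1 := by positivity
    calc ‖cu p‖ = ((p:ℝ)+1) * ‖fcoef F ((n:ℤ)+p+1)‖ := by
          rw [hcu_def]; simp only [norm_mul, RCLike.norm_conj, hnat p]
      _ ≤ ((n:ℝ)+p+1) * (Mf / ((n:ℝ)+p+1)^3) := by
          apply mul_le_mul (by linarith [Nat.cast_nonneg (α := ℝ) n]) (hfd n p)
            (norm_nonneg _) (by positivity)
      _ = Mf / ((n:ℝ)+p+1)^2 := by field_simp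
  have hcw_bd : ∀ q : ℕ, ‖cw q‖ ≤ Mg / ((n:ℝ)+q+1) := by
    intro q
    have hx : (0:ℝ) < (n:ℝ)+q+1 := by positivity
    calc ‖cw q‖ = ((q:ℝ)+1) * ‖fcoef G ((n:ℤ)+q+1)‖ := by
          rw [hcw_def]; simp only [RCLike.norm_conj, norm_mul, hnat q]
      _ ≤ ((n:ℝ)+q+1) * (Mg / ((n:ℝ)+q+1)^2) := by
          apply mul_le_mul (by linarith [Nat.cast_nonneg (α := ℝ) n]) (hgd n q)
            (norm_nonneg _) (by positivity)
      _ = Mg / ((n:ℝ)+q+1) := by field_simp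
  -- summability and tsum bounds for squares
  have hsq_u : ∀ p : ℕ, ‖cu p‖^(2:ℕ) ≤ (Mf^2/((n:ℝ)+1)^2) * (1/((n:ℝ)+p+1)^2) := by
    intro p
    have hx : (0:ℝ) < (n:ℝ)+p+1 := by positivity
    have h1 : ‖cu p‖^(2:ℕ) ≤ (Mf / ((n:ℝ)+p+1)^2)^2 :=
      pow_le_pow_left₀ (norm_nonneg _) (hcu_bd p) 2
    refine h1.trans ?_
    have hle : ((n:ℝ)+1)^2 ≤ ((n:ℝ)+p+1)^2 := by
      apply pow_le_pow_left₀ (by positivity) (by linarith [Nat.cast_nonneg (α := ℝ) p])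
    calc (Mf / ((n:ℝ)+p+1)^2)^2
        = (Mf^2/((n:ℝ)+p+1)^2) * (1/((n:ℝ)+p+1)^2) := by
          rw [div_pow, div_mul_div_comm, mul_one]
          congr 1
          ring
      _ ≤ (Mf^2/((n:ℝ)+1)^2) * (1/((n:ℝ)+p+1)^2) := by
          apply mul_le_mul_of_nonneg_right _ (by positivity)
          exact div_le_div_of_nonneg_left (by positivity) (by positivity) hle
  have hsq_w : ∀ q : ℕ, ‖cw q‖^(2:ℕ) ≤ Mg^2 * (1/((n:ℝ)+q+1)^2) := by
    intro q
    have hx : (0:ℝ) < (n:ℝ)+q+1 := by positivity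
    have h1 : ‖cw q‖^(2:ℕ) ≤ (Mg / ((n:ℝ)+q+1))^2 :=
      pow_le_pow_left₀ (norm_nonneg _) (hcw_bd q) 2
    refine h1.trans ?_
    rw [div_pow, mul_one_div]
  have hsum_u : Summable (fun p : ℕ => ‖cu p‖^(2:ℕ)) := by
    apply Summable.of_nonneg_of_le (fun p => by positivity) hsq_u
    exact (summable_inv_sq_shift n).mul_left _
  have hsum_w : Summable (fun q : ℕ => ‖cw q‖^(2:ℕ)) := by
    apply Summable.of_nonneg_of_le (fun q => by positivity) hsq_w
    exact (summable_inv_sq_shift n).mul_left _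
  have htsum_u : ∑' (p : ℕ), ‖cu p‖^(2:ℕ) ≤ 2*Mf^2/((n:ℝ)+1)^3 := by
    calc ∑' (p : ℕ), ‖cu p‖^(2:ℕ)
        ≤ ∑' (p : ℕ), (Mf^2/((n:ℝ)+1)^2) * (1/((n:ℝ)+p+1)^2) :=
          Summable.tsum_le_tsum hsq_u hsum_u ((summable_inv_sq_shift n).mul_left _)
      _ = (Mf^2/((n:ℝ)+1)^2) * ∑' (p : ℕ), 1/((n:ℝ)+p+1)^2 := tsum_mul_left
      _ ≤ (Mf^2/((n:ℝ)+1)^2) * (2/((n:ℝ)+1)) := by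
          apply mul_le_mul_of_nonneg_left (tsum_inv_sq_le n) (by positivity)
      _ = 2*Mf^2/((n:ℝ)+1)^3 := by field_simp
  have htsum_w : ∑' (q : ℕ), ‖cw q‖^(2:ℕ) ≤ 2*Mg^2/((n:ℝ)+1) := by
    calc ∑' (q : ℕ), ‖cw q‖^(2:ℕ)
        ≤ ∑' (q : ℕ), Mg^2 * (1/((n:ℝ)+q+1)^2) :=
          Summable.tsum_le_tsum hsq_w hsum_w ((summable_inv_sq_shift n).mul_left _)
      _ = Mg^2 * ∑' (q : ℕ), 1/((n:ℝ)+q+1)^2 := tsum_mul_left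
      _ ≤ Mg^2 * (2/((n:ℝ)+1)) := by
          apply mul_le_mul_of_nonneg_left (tsum_inv_sq_le n) (by positivity)
      _ = 2*Mg^2/((n:ℝ)+1) := by field_simp
  -- build the two vectors
  obtain ⟨u, hu_norm, hu_coord⟩ := vec_of_coords b cu (Real.sqrt (2*Mf^2/((n:ℝ)+1)^3))
    (Real.sqrt_nonneg _) hsum_u
    (by rw [Real.sq_sqrt (by positivity)]; exact htsum_u)
  obtain ⟨w, hw_norm, hw_coord⟩ := vec_of_coords b cw (Real.sqrt (2*Mg^2/((n:ℝ)+1)))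
    (Real.sqrt_nonneg _) hsum_w
    (by rw [Real.sq_sqrt (by positivity)]; exact htsum_w)
  refine ⟨(innerSL ℂ w).smulRight u, ?_, ?_⟩
  · calc ‖(innerSL ℂ w).smulRight u‖ = ‖innerSL ℂ w‖ * ‖u‖ :=
          ContinuousLinearMap.norm_smulRight_apply _ _
      _ ≤ ‖w‖ * ‖u‖ := by
          apply mul_le_mul_of_nonneg_right (innerSL_apply_norm (𝕜 := ℂ) w).le (norm_nonneg _)
      _ ≤ Real.sqrt (2*Mg^2/((n:ℝ)+1)) * Real.sqrt (2*Mf^2/((n:ℝ)+1)^3) :=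
          mul_le_mul hw_norm hu_norm (norm_nonneg _) (Real.sqrt_nonneg _)
      _ = 2*Mf*Mg / ((n:ℝ)+1)^2 := by
          rw [← Real.sqrt_mul (by positivity)]
          rw [show (2*Mg^2/((n:ℝ)+1)) * (2*Mf^2/((n:ℝ)+1)^3) = (2*Mf*Mg/((n:ℝ)+1)^2)^2 by
            field_simp]
          exact Real.sqrt_sq (by positivity)
  · intro p q
    have happ : ((innerSL ℂ w).smulRight u) (b q) = ⟪w, b q⟫_ℂ • u := rfl
    rw [happ, inner_smul_right, hu_coord p]
    have : ⟪w, b q⟫_ℂ = ((q:ℂ)+1) * fcoef G ((n:ℤ)+q+1) := by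
      rw [← inner_conj_symm, hw_coord q, hcw_def]
      simp
    rw [this]

end AuxStmt7

/-- For real-valued `f ∈ C³(𝕋)`, `g ∈ C²(𝕋)` the form
`G₊(φ,ψ) = ⟨φ, X H_f* H_g X ψ⟩` on the span of the canonical basis is bounded:
`X H_f* H_g X` extends to a bounded operator. -/
theorem stmt_7 (e : ℕ → E) (he : IsONBasis e)
    (f g : ℝ → ℝ) (hf : ContDiff ℝ 3 f) (hg : ContDiff ℝ 2 g)
    (hfp : Function.Periodic f (2 * Real.pi)) (hgp : Function.Periodic g (2 * Real.pi))
    (Hf Hg : E →L[ℂ] E)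
    (hHf : IsHankel e (fun x => Complex.ofReal (f x)) Hf)
    (hHg : IsHankel e (fun x => Complex.ofReal (g x)) Hg) :
    ∃ B : E →L[ℂ] E, ∀ p q : ℕ,
      ⟪e p, B (e q)⟫_ℂ =
        ((p : ℂ) + 1) * ((q : ℂ) + 1) *
          ⟪e p, (ContinuousLinearMap.adjoint Hf) (Hg (e q))⟫_ℂ := by
  classical
  obtain ⟨honb, hdense⟩ := he
  let b : HilbertBasis ℕ ℂ E := HilbertBasis.mk honb (ge_of_eq hdense)
  have hb : ∀ i, b i = e i := fun i => by
    rw [show (b : ℕ → E) = e from HilbertBasis.coe_mk _ _]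
  set F : ℝ → ℂ := fun x => Complex.ofReal (f x) with hF_def
  set G : ℝ → ℂ := fun x => Complex.ofReal (g x) with hG_def
  have hFc : ContDiff ℝ (3:ℕ) F := Complex.ofRealCLM.contDiff.comp (by exact_mod_cast hf)
  have hGc : ContDiff ℝ (2:ℕ) G := Complex.ofRealCLM.contDiff.comp (by exact_mod_cast hg)
  have hFp : Function.Periodic F (2 * Real.pi) := fun x => by simp [hF_def, hfp x]
  have hGp : Function.Periodic G (2 * Real.pi) := fun x => by simp [hG_def, hgp x]
  obtain ⟨Mf, hMf0, hMf⟩ := fcoef_decay 3 F hFc hFp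
  obtain ⟨Mg, hMg0, hMg⟩ := fcoef_decay 2 G hGc hGp
  have hfd : ∀ n p : ℕ, ‖fcoef F ((n:ℤ)+p+1)‖ ≤ Mf / ((n:ℝ)+p+1)^3 := by
    intro n p
    have h1 := hMf (n+p)
    have hcast : (((n+p:ℕ):ℤ)) + 1 = (n:ℤ)+p+1 := by push_cast; ring
    rw [hcast] at h1
    rw [le_div_iff₀ (by positivity)]
    push_cast at h1
    calc ‖fcoef F ((n:ℤ)+p+1)‖ * ((n:ℝ)+p+1)^3
        = ‖fcoef F ((n:ℤ)+p+1)‖ * (((n:ℝ)+(p:ℝ))+1)^3 := by ring_nf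
      _ ≤ Mf := h1
  have hgd : ∀ n q : ℕ, ‖fcoef G ((n:ℤ)+q+1)‖ ≤ Mg / ((n:ℝ)+q+1)^2 := by
    intro n q
    have h1 := hMg (n+q)
    have hcast : (((n+q:ℕ):ℤ)) + 1 = (n:ℤ)+q+1 := by push_cast; ring
    rw [hcast] at h1
    rw [le_div_iff₀ (by positivity)]
    push_cast at h1
    calc ‖fcoef G ((n:ℤ)+q+1)‖ * ((n:ℝ)+q+1)^2
        = ‖fcoef G ((n:ℤ)+q+1)‖ * (((n:ℝ)+(q:ℝ))+1)^2 := by ring_nf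
      _ ≤ Mg := h1
  -- the rank one pieces
  choose R hR_norm hR_entry using rank_one_piece b F G Mf Mg hMf0 hMg0 hfd hgd
  -- summability in operator norm
  have hbound_sum : Summable (fun n : ℕ => 2*Mf*Mg / ((n:ℝ)+1)^2) := by
    have h1 := (summable_inv_sq_shift 0).mul_left (2*Mf*Mg)
    refine h1.congr fun n => ?_
    push_cast
    rw [mul_one_div]
    norm_num
  have hRsum : Summable R := by
    apply Summable.of_norm_bounded hbound_sum hR_norm
  refine ⟨∑' n, R n, fun p q => ?_⟩
  -- unfold the matrix entry
  have hev : (∑' n, R n) (e q) = ∑' n, R n (e q) := by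
    exact (ContinuousLinearMap.apply ℂ E (e q)).map_tsum hRsum
  have hsum_apply : Summable (fun n => R n (e q)) := by
    exact (ContinuousLinearMap.apply ℂ E (e q)).summable hRsum
  rw [hev]
  have hinner : ⟪e p, ∑' n, R n (e q)⟫_ℂ = ∑' n, ⟪e p, R n (e q)⟫_ℂ := by
    exact (innerSL ℂ (e p)).map_tsum hsum_apply
  rw [hinner]
  have hterm : ∀ n : ℕ, ⟪e p, R n (e q)⟫_ℂ =
      (((q:ℂ)+1) * fcoef G ((n:ℤ)+q+1)) * (((p:ℂ)+1) * (starRingEnd ℂ) (fcoef F ((n:ℤ)+p+1))) := by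
    intro n
    rw [← hb p, ← hb q]
    exact hR_entry n p q
  rw [tsum_congr hterm]
  -- now the right hand side
  rw [ContinuousLinearMap.adjoint_inner_right]
  rw [← b.tsum_inner_mul_inner (Hf (e p)) (Hg (e q))]
  rw [← tsum_mul_left]
  apply tsum_congr
  intro n
  rw [hb n]
  have h1 : ⟪Hf (e p), e n⟫_ℂ = (starRingEnd ℂ) (fcoef F ((n:ℤ)+p+1)) := by
    rw [← inner_conj_symm, hHf n p]
  have h2 : ⟪e n, Hg (e q)⟫_ℂ = fcoef G ((n:ℤ)+q+1) := hHg n q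
  rw [h1, h2]
  ring
end
end

section
/- Let f(θ) = 2cos θ, T_f = S + S*, and A_{f'} the self-adjoint closure of (i/2)((S−S*)X + X(S−S*)) on ℓ²(ℕ). Then the unilateral shift S belongs to C¹(A_{f'}) and i·ad_{A_{f'}} S = −S² + I + ½ |e₁⟩⟨e₁|. -/
open scoped InnerProductSpace
open Complex

noncomputable section

variable {E : Type*} [NormedAddCommGroup E] [InnerProductSpace ℂ E] [CompleteSpace E]

lemma Jint (m : ℤ) : (∫ θ in (0:ℝ)..(2*Real.pi), Complex.exp (m * I * θ))
    = if m = 0 then (2*Real.pi : ℂ) else 0 := by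
  rcases eq_or_ne m 0 with h | h
  · simp [h]
  · have hc : (m : ℂ) * I ≠ 0 := by
      simp [Complex.ext_iff, h]
    rw [if_neg h, integral_exp_mul_complex hc]
    have h1 : Complex.exp ((m:ℂ) * I * (2*Real.pi)) = 1 := by
      rw [show (m:ℂ) * I * (2*Real.pi) = m * (2 * Real.pi * I) by push_cast; ring]
      exact Complex.exp_int_mul_two_pi_mul_I m
    simp [h1]

lemma integrable_exp (m : ℤ) (a b : ℝ) :
    IntervalIntegrable (fun θ : ℝ => Complex.exp (m * I * θ)) MeasureTheory.volume a b := by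
  apply Continuous.intervalIntegrable
  exact Complex.continuous_exp.comp (continuous_const.mul Complex.continuous_ofReal)

lemma fcoef_msin (k : ℤ) :
    fcoef (fun θ => (-2 : ℂ) * Complex.ofReal (Real.sin θ)) k
      = if k = 1 then I else if k = -1 then -I else 0 := by
  have key : ∀ θ : ℝ, Complex.exp (-Complex.I * k * θ) * ((-2 : ℂ) * Complex.ofReal (Real.sin θ))
      = I * Complex.exp (((1 - k : ℤ) : ℂ) * I * θ) - I * Complex.exp (((-1 - k : ℤ) : ℂ) * I * θ) := by
    intro θ
    rw [Complex.ofReal_sin, Complex.sin]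
    rw [show (((1 - k : ℤ) : ℂ) * I * θ) = (θ:ℂ) * I + (-Complex.I * k * θ) by push_cast; ring,
        show (((-1 - k : ℤ) : ℂ) * I * θ) = (-(θ:ℂ) * I) + (-Complex.I * k * θ) by push_cast; ring,
        Complex.exp_add, Complex.exp_add]
    ring
  unfold fcoef
  rw [intervalIntegral.integral_congr (g := fun θ : ℝ =>
    I * Complex.exp (((1 - k : ℤ) : ℂ) * I * θ) - I * Complex.exp (((-1 - k : ℤ) : ℂ) * I * θ))
    (fun θ _ => key θ)]
  rw [intervalIntegral.integral_sub ((integrable_exp (1-k) _ _).const_mul I)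
    ((integrable_exp (-1-k) _ _).const_mul I),
    intervalIntegral.integral_const_mul, intervalIntegral.integral_const_mul, Jint, Jint]
  have hπ : (Real.pi : ℂ) ≠ 0 := by exact_mod_cast Real.pi_ne_zero
  rcases eq_or_ne k 1 with h | h
  · subst h; norm_num
    field_simp
  · rcases eq_or_ne k (-1) with h1 | h1
    · subst h1; norm_num
      field_simp
    · rw [if_neg h, if_neg h1, if_neg (by omega), if_neg (by omega)]
      simp


lemma parseval (e : ℕ → E) (he : IsONBasis e) (x y : E) :
    HasSum (fun i => ⟪x, e i⟫_ℂ * ⟪e i, y⟫_ℂ) ⟪x, y⟫_ℂ := by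
  have hsp : ⊤ ≤ (Submodule.span ℂ (Set.range e)).topologicalClosure := he.2.ge
  have h := (HilbertBasis.mk he.1 hsp).hasSum_inner_mul_inner x y
  have hco := HilbertBasis.coe_mk he.1 hsp
  have hco2 := congrFun hco
  simp only [hco2] at h
  exact h

lemma ext_coef (e : ℕ → E) (he : IsONBasis e) {u v : E}
    (h : ∀ i, ⟪e i, u⟫_ℂ = ⟪e i, v⟫_ℂ) : u = v := by
  have h0 : ∀ i, ⟪e i, u - v⟫_ℂ = 0 := by
    intro i; rw [inner_sub_right, h, sub_self]
  have hs := parseval e he (u - v) (u - v)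
  simp only [h0, mul_zero] at hs
  have h2 : ⟪u - v, u - v⟫_ℂ = 0 := hs.unique hasSum_zero
  rw [← sub_eq_zero]
  exact inner_self_eq_zero.mp h2

section shift
variable (e : ℕ → E) (Sh : E →L[ℂ] E)

lemma inner_ee (he : IsONBasis e) (i j : ℕ) : ⟪e i, e j⟫_ℂ = if i = j then 1 else 0 :=
  orthonormal_iff_ite.mp he.1 i j

lemma coefSh0 (he : IsONBasis e) (hSh : ∀ n : ℕ, Sh (e n) = e (n + 1)) (x : E) : ⟪e 0, Sh x⟫_ℂ = 0 := by
  have hadj : (ContinuousLinearMap.adjoint Sh) (e 0) = 0 := by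
    apply ext_coef e he
    intro i
    rw [ContinuousLinearMap.adjoint_inner_right, hSh, inner_ee e he, inner_zero_right]
    simp
  rw [← ContinuousLinearMap.adjoint_inner_left, hadj, inner_zero_left]

lemma coefShS (he : IsONBasis e) (hSh : ∀ n : ℕ, Sh (e n) = e (n + 1)) (n : ℕ) (x : E) : ⟪e (n+1), Sh x⟫_ℂ = ⟪e n, x⟫_ℂ := by
  have hadj : (ContinuousLinearMap.adjoint Sh) (e (n+1)) = e n := by
    apply ext_coef e he
    intro i
    rw [ContinuousLinearMap.adjoint_inner_right, hSh, inner_ee e he, inner_ee e he]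
    simp
  rw [← ContinuousLinearMap.adjoint_inner_left, hadj]

lemma hShift (he : IsONBasis e) (hSh : ∀ n : ℕ, Sh (e n) = e (n + 1)) (x y : E) : HasSum (fun n => ⟪x, e (n+1)⟫_ℂ * ⟪e n, y⟫_ℂ) ⟪x, Sh y⟫_ℂ := by
  have h := parseval e he x (Sh y)
  have h2 := (hasSum_nat_add_iff' (f := fun i => ⟪x, e i⟫_ℂ * ⟪e i, Sh y⟫_ℂ) 1).mpr h
  simp only [Finset.range_one, Finset.sum_singleton, coefSh0 e Sh he hSh, mul_zero, sub_zero] at h2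
  have h3 : ∀ n : ℕ, ⟪x, e (n+1)⟫_ℂ * ⟪e (n+1), Sh y⟫_ℂ = ⟪x, e (n+1)⟫_ℂ * ⟪e n, y⟫_ℂ := by
    intro n; rw [coefShS e Sh he hSh]
  simpa only [h3] using h2

end shift

section Aop
variable (e : ℕ → E) (A : E →ₗ.[ℂ] E)

lemma symmA (he : IsONBasis e) (hsa : A.adjoint = A) (hdom : ∀ q : ℕ, e q ∈ A.domain) :
    ∀ x y : A.domain, ⟪A x, (y : E)⟫_ℂ = ⟪(x : E), A y⟫_ℂ := by
  have hdense : Dense (A.domain : Set E) := by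
    have hle : Submodule.span ℂ (Set.range e) ≤ A.domain :=
      Submodule.span_le.mpr (by rintro _ ⟨q, rfl⟩; exact hdom q)
    rw [Submodule.dense_iff_topologicalClosure_eq_top]
    apply top_unique
    rw [← he.2]
    exact Submodule.topologicalClosure_mono hle
  have h := LinearPMap.adjoint_isFormalAdjoint (T := A) hdense
  rw [hsa] at h
  exact fun x y => h x y

end Aop

section Amat
variable (e : ℕ → E) (A : E →ₗ.[ℂ] E)

def gsin : ℝ → ℂ := fun θ => (-2 : ℂ) * Complex.ofReal (Real.sin θ)

lemma matA (hmat : ∀ q : ℕ, ∃ hq : e q ∈ A.domain, ∀ p : ℕ,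
      ⟪e p, A ⟨e q, hq⟩⟫_ℂ = (((p:ℂ)+q+2)/2) * fcoef gsin ((p:ℤ)-q))
    (p q : ℕ) (hq : e q ∈ A.domain) :
    ⟪e p, A ⟨e q, hq⟩⟫_ℂ = if p = q + 1 then I * ((2*(q:ℂ)+3)/2)
      else if q = p + 1 then -I * ((2*(p:ℂ)+3)/2) else 0 := by
  obtain ⟨hq', hfor⟩ := hmat q
  have heq : (⟨e q, hq⟩ : A.domain) = ⟨e q, hq'⟩ := rfl
  rw [heq, hfor p]
  have : fcoef gsin ((p:ℤ)-q) = if (p:ℤ)-q = 1 then I else if (p:ℤ)-q = -1 then -I else 0 :=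
    fcoef_msin _
  rw [this]
  rcases eq_or_ne p (q+1) with h | h
  · subst h
    rw [if_pos (by omega), if_pos rfl]
    push_cast; ring
  · rw [if_neg (by omega), if_neg h]
    rcases eq_or_ne q (p+1) with h1 | h1
    · subst h1
      rw [if_pos (by omega), if_pos rfl]
      push_cast; ring
    · rw [if_neg (by omega), if_neg h1, mul_zero]

end Amat

section Acoef
variable (e : ℕ → E) (A : E →ₗ.[ℂ] E)

lemma coefA0 (he : IsONBasis e) (hsa : A.adjoint = A)
    (hmat : ∀ q : ℕ, ∃ hq : e q ∈ A.domain, ∀ p : ℕ,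
      ⟪e p, A ⟨e q, hq⟩⟫_ℂ = (((p:ℂ)+q+2)/2) * fcoef gsin ((p:ℤ)-q))
    (x : A.domain) :
    ⟪e 0, A x⟫_ℂ = -I * (3/2) * ⟪e 1, (x:E)⟫_ℂ := by
  have hdom : ∀ q : ℕ, e q ∈ A.domain := fun q => (hmat q).choose
  have hsym := symmA e A he hsa hdom ⟨e 0, hdom 0⟩ x
  rw [← hsym]
  have hzero : ∀ p ∉ ({1} : Finset ℕ), ⟪A ⟨e 0, hdom 0⟩, e p⟫_ℂ * ⟪e p, (x:E)⟫_ℂ = 0 := by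
    intro p hp
    simp only [Finset.mem_singleton] at hp
    rw [← inner_conj_symm, matA e A hmat p 0 (hdom 0), if_neg (by omega), if_neg (by omega)]
    simp
  have h1 : HasSum _ _ := hasSum_sum_of_ne_finset_zero hzero
  have h2 := (parseval e he (A ⟨e 0, hdom 0⟩) (x:E)).unique h1
  have hip : ∀ p, ⟪A ⟨e 0, hdom 0⟩, e p⟫_ℂ = (starRingEnd ℂ) (⟪e p, A ⟨e 0, hdom 0⟩⟫_ℂ) :=
    fun p => (inner_conj_symm _ _).symm
  rw [h2, Finset.sum_singleton, hip 1, matA e A hmat 1 0 (hdom 0), if_pos rfl]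
  simp only [map_mul, map_div₀, Complex.conj_I, map_add, map_ofNat, Complex.conj_natCast,
    map_one]
  push_cast
  ring

lemma coefAS (he : IsONBasis e) (hsa : A.adjoint = A)
    (hmat : ∀ q : ℕ, ∃ hq : e q ∈ A.domain, ∀ p : ℕ,
      ⟪e p, A ⟨e q, hq⟩⟫_ℂ = (((p:ℂ)+q+2)/2) * fcoef gsin ((p:ℤ)-q))
    (n : ℕ) (x : A.domain) :
    ⟪e (n+1), A x⟫_ℂ = -I * ((2*(n:ℂ)+5)/2) * ⟪e (n+2), (x:E)⟫_ℂ
      + I * ((2*(n:ℂ)+3)/2) * ⟪e n, (x:E)⟫_ℂ := by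
  have hdom : ∀ q : ℕ, e q ∈ A.domain := fun q => (hmat q).choose
  have hsym := symmA e A he hsa hdom ⟨e (n+1), hdom (n+1)⟩ x
  rw [← hsym]
  have hzero : ∀ p ∉ ({n, n+2} : Finset ℕ),
      ⟪A ⟨e (n+1), hdom (n+1)⟩, e p⟫_ℂ * ⟪e p, (x:E)⟫_ℂ = 0 := by
    intro p hp
    simp only [Finset.mem_insert, Finset.mem_singleton] at hp
    push_neg at hp
    rw [← inner_conj_symm, matA e A hmat p (n+1) (hdom (n+1)), if_neg (by omega),
      if_neg (by omega)]
    simp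
  have h1 : HasSum _ _ := hasSum_sum_of_ne_finset_zero hzero
  have h2 := (parseval e he (A ⟨e (n+1), hdom (n+1)⟩) (x:E)).unique h1
  have hip : ∀ p, ⟪A ⟨e (n+1), hdom (n+1)⟩, e p⟫_ℂ
      = (starRingEnd ℂ) (⟪e p, A ⟨e (n+1), hdom (n+1)⟩⟫_ℂ) :=
    fun p => (inner_conj_symm _ _).symm
  rw [h2, Finset.sum_insert (by simp), Finset.sum_singleton,
    hip n, matA e A hmat n (n+1) (hdom (n+1)), if_neg (by omega), if_pos rfl,
    hip (n+2), matA e A hmat (n+2) (n+1) (hdom (n+1)), if_pos (by omega)]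
  simp only [map_mul, map_neg, Complex.conj_I, map_div₀, map_add, map_ofNat, Complex.conj_natCast,
    map_one]
  push_cast
  ring
end Acoef

section main
variable (e : ℕ → E) (A : E →ₗ.[ℂ] E)

set_option maxHeartbeats 2000000 in
theorem stmt_15' (e : ℕ → E) (he : IsONBasis e)
    (Sh : E →L[ℂ] E) (hSh : ∀ n : ℕ, Sh (e n) = e (n + 1))
    (A : E →ₗ.[ℂ] E)
    (hsa : A.adjoint = A)
    (hmat : ∀ q : ℕ, ∃ hq : e q ∈ A.domain, ∀ p : ℕ,
      ⟪e p, A ⟨e q, hq⟩⟫_ℂ = (((p:ℂ)+q+2)/2) * fcoef gsin ((p:ℤ)-q))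
    (φ ψ : A.domain) :
    ⟪A φ, Sh (ψ : E)⟫_ℂ - ⟪(φ : E), Sh (A ψ)⟫_ℂ = ⟪(φ : E), ((-Complex.I) •
      (-(Sh ∘L Sh) + 1 + ((1 : ℂ) / 2) • ((innerSL ℂ (e 0)).smulRight (e 0)))) (ψ : E)⟫_ℂ := by
  classical
  -- HasSum facts
  have H1 : HasSum (fun n => ⟪A φ, e (n+1)⟫_ℂ * ⟪e n, (ψ:E)⟫_ℂ) ⟪A φ, Sh (ψ:E)⟫_ℂ :=
    hShift e Sh he hSh (A φ) (ψ:E)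
  have H2 : HasSum (fun n => ⟪(φ:E), e (n+1)⟫_ℂ * ⟪e n, A ψ⟫_ℂ) ⟪(φ:E), Sh (A ψ)⟫_ℂ :=
    hShift e Sh he hSh (φ:E) (A ψ)
  have H3 : HasSum (fun n => ⟪(φ:E), e (n+2)⟫_ℂ * ⟪e n, (ψ:E)⟫_ℂ) ⟪(φ:E), Sh (Sh (ψ:E))⟫_ℂ := by
    have h1 := hShift e Sh he hSh (φ:E) (Sh (ψ:E))
    have h2 := (hasSum_nat_add_iff'
      (f := fun n => ⟪(φ:E), e (n+1)⟫_ℂ * ⟪e n, Sh (ψ:E)⟫_ℂ) 1).mpr h1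
    simp only [Finset.range_one, Finset.sum_singleton, coefSh0 e Sh he hSh, mul_zero,
      sub_zero] at h2
    have h3 : ∀ n : ℕ, ⟪(φ:E), e (n+1+1)⟫_ℂ * ⟪e (n+1), Sh (ψ:E)⟫_ℂ
        = ⟪(φ:E), e (n+2)⟫_ℂ * ⟪e n, (ψ:E)⟫_ℂ := by
      intro n; rw [coefShS e Sh he hSh]
    simpa only [h3] using h2
  have H4 : HasSum (fun n => ⟪(φ:E), e n⟫_ℂ * ⟪e n, (ψ:E)⟫_ℂ) ⟪(φ:E), (ψ:E)⟫_ℂ :=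
    parseval e he (φ:E) (ψ:E)
  -- combined sum
  have hK : HasSum
      (fun n => ⟪A φ, e (n+1)⟫_ℂ * ⟪e n, (ψ:E)⟫_ℂ - ⟪(φ:E), e (n+1)⟫_ℂ * ⟪e n, A ψ⟫_ℂ
        - I * (⟪(φ:E), e (n+2)⟫_ℂ * ⟪e n, (ψ:E)⟫_ℂ) + I * (⟪(φ:E), e n⟫_ℂ * ⟪e n, (ψ:E)⟫_ℂ))
      (⟪A φ, Sh (ψ:E)⟫_ℂ - ⟪(φ:E), Sh (A ψ)⟫_ℂ - I * ⟪(φ:E), Sh (Sh (ψ:E))⟫_ℂ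
        + I * ⟪(φ:E), (ψ:E)⟫_ℂ) :=
    ((H1.sub H2).sub (H3.mul_left I)).add (H4.mul_left I)
  -- telescoping function
  set hs : ℕ → ℂ := fun n =>
    (if n = 0 then 0 else ⟪(φ:E), e (n+1)⟫_ℂ * ⟪e (n-1), (ψ:E)⟫_ℂ)
      + ⟪(φ:E), e n⟫_ℂ * ⟪e n, (ψ:E)⟫_ℂ with hsdef
  set g : ℕ → ℂ := fun n => I * ((2*(n:ℂ)+1)/2) * hs n with hgdef
  have hφc : ∀ k, (starRingEnd ℂ) ⟪e k, (φ:E)⟫_ℂ = ⟪(φ:E), e k⟫_ℂ := fun k => inner_conj_symm _ _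
  have hGg : ∀ n, ⟪A φ, e (n+1)⟫_ℂ * ⟪e n, (ψ:E)⟫_ℂ - ⟪(φ:E), e (n+1)⟫_ℂ * ⟪e n, A ψ⟫_ℂ
        - I * (⟪(φ:E), e (n+2)⟫_ℂ * ⟪e n, (ψ:E)⟫_ℂ) + I * (⟪(φ:E), e n⟫_ℂ * ⟪e n, (ψ:E)⟫_ℂ)
        = g (n+1) - g n := by
    intro n
    have hAφ : ⟪A φ, e (n+1)⟫_ℂ = (starRingEnd ℂ) ⟪e (n+1), A φ⟫_ℂ := (inner_conj_symm _ _).symm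
    cases n with
    | zero =>
      rw [hAφ, coefAS e A he hsa hmat 0 φ, coefA0 e A he hsa hmat ψ, hgdef]
      simp only [hsdef, map_add, map_mul, map_neg, map_div₀, Complex.conj_I, map_ofNat, map_one,
        Complex.conj_natCast, hφc]
      norm_num
      ring
    | succ m =>
      rw [hAφ, coefAS e A he hsa hmat (m+1) φ, coefAS e A he hsa hmat m ψ, hgdef]
      simp only [hsdef, map_add, map_mul, map_neg, map_div₀, Complex.conj_I, map_ofNat, map_one,
        Complex.conj_natCast, hφc, Nat.succ_ne_zero, if_neg, Nat.succ_sub_one]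
      push_cast
      ring
  -- square-summability of coefficients
  have sqsum : ∀ v : E, Summable (fun n => ‖⟪e n, v⟫_ℂ‖^2) := by
    intro v
    have h := parseval e he v v
    have h' : ∀ n, ⟪v, e n⟫_ℂ * ⟪e n, v⟫_ℂ = ((‖⟪e n, v⟫_ℂ‖^2 : ℝ) : ℂ) := by
      intro n
      rw [← inner_conj_symm, mul_comm, Complex.mul_conj]
      norm_cast
      rw [Complex.normSq_eq_norm_sq]
    simp only [h'] at h
    have h2 := ((Complex.hasSum_iff _ _).mp h).1
    simp only [Complex.ofReal_re] at h2
    exact h2.summable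
  -- summability of ‖hs‖
  have hsnorm : Summable (fun n => ‖hs n‖) := by
    have hb1 : Summable (fun n => ‖⟪e (n+1), (φ:E)⟫_ℂ‖^2) :=
      (summable_nat_add_iff 1).mpr (sqsum (φ:E))
    have hb2 : Summable (fun n => ‖⟪e (n-1), (ψ:E)⟫_ℂ‖^2) := by
      apply (summable_nat_add_iff 1).mp
      simpa using sqsum (ψ:E)
    have hb3 := sqsum (φ:E)
    have hb4 := sqsum (ψ:E)
    apply Summable.of_nonneg_of_le (fun n => norm_nonneg _)
      (f := fun n => (‖⟪e (n+1), (φ:E)⟫_ℂ‖^2 + ‖⟪e (n-1), (ψ:E)⟫_ℂ‖^2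
        + (‖⟪e n, (φ:E)⟫_ℂ‖^2 + ‖⟪e n, (ψ:E)⟫_ℂ‖^2))/2)
    · intro n
      have h1 : ‖⟪(φ:E), e (n+1)⟫_ℂ‖ = ‖⟪e (n+1), (φ:E)⟫_ℂ‖ := by
        rw [← inner_conj_symm]; exact RCLike.norm_conj _
      have h2 : ‖⟪(φ:E), e n⟫_ℂ‖ = ‖⟪e n, (φ:E)⟫_ℂ‖ := by
        rw [← inner_conj_symm]; exact RCLike.norm_conj _
      have hA1 : ‖(if n = 0 then (0:ℂ) else ⟪(φ:E), e (n+1)⟫_ℂ * ⟪e (n-1), (ψ:E)⟫_ℂ)‖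
          ≤ ‖⟪e (n+1), (φ:E)⟫_ℂ‖ * ‖⟪e (n-1), (ψ:E)⟫_ℂ‖ := by
        split
        · simp only [norm_zero]; positivity
        · rw [norm_mul, h1]
      have hA2 : ‖⟪(φ:E), e n⟫_ℂ * ⟪e n, (ψ:E)⟫_ℂ‖ = ‖⟪e n, (φ:E)⟫_ℂ‖ * ‖⟪e n, (ψ:E)⟫_ℂ‖ := by
        rw [norm_mul, h2]
      have hadd := norm_add_le (if n = 0 then (0:ℂ)
        else ⟪(φ:E), e (n+1)⟫_ℂ * ⟪e (n-1), (ψ:E)⟫_ℂ) (⟪(φ:E), e n⟫_ℂ * ⟪e n, (ψ:E)⟫_ℂ)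
      rw [hsdef]
      simp only []
      nlinarith [sq_nonneg (‖⟪e (n+1), (φ:E)⟫_ℂ‖ - ‖⟪e (n-1), (ψ:E)⟫_ℂ‖),
        sq_nonneg (‖⟪e n, (φ:E)⟫_ℂ‖ - ‖⟪e n, (ψ:E)⟫_ℂ‖)]
    · exact ((hb1.add hb2).add (hb3.add hb4)).div_const 2
  -- partial sums telescope
  have hpart : ∀ N, (∑ n ∈ Finset.range N,
      (⟪A φ, e (n+1)⟫_ℂ * ⟪e n, (ψ:E)⟫_ℂ - ⟪(φ:E), e (n+1)⟫_ℂ * ⟪e n, A ψ⟫_ℂ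
        - I * (⟪(φ:E), e (n+2)⟫_ℂ * ⟪e n, (ψ:E)⟫_ℂ)
        + I * (⟪(φ:E), e n⟫_ℂ * ⟪e n, (ψ:E)⟫_ℂ))) = g N - g 0 := by
    intro N
    rw [Finset.sum_congr rfl (fun n _ => hGg n), Finset.sum_range_sub g N]
  have hgt : Filter.Tendsto g Filter.atTop
      (nhds ((⟪A φ, Sh (ψ:E)⟫_ℂ - ⟪(φ:E), Sh (A ψ)⟫_ℂ - I * ⟪(φ:E), Sh (Sh (ψ:E))⟫_ℂ
        + I * ⟪(φ:E), (ψ:E)⟫_ℂ) + g 0)) := by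
    have h := hK.tendsto_sum_nat
    have h2 := (Filter.tendsto_congr hpart).mp h
    have h3 := h2.add_const (g 0)
    simpa using h3
  -- norm of g
  have hgn : ∀ n : ℕ, ‖g n‖ = ((2*(n:ℝ)+1)/2) * ‖hs n‖ := by
    intro n
    have hco : ((2*(n:ℂ)+1)/2) = (((2*(n:ℝ)+1)/2 : ℝ) : ℂ) := by push_cast; ring
    rw [hgdef]
    simp only []
    rw [norm_mul, norm_mul, Complex.norm_I, one_mul, hco, Complex.norm_real,
      Real.norm_of_nonneg (by positivity)]
  -- the limit is zero
  have hL0 : (⟪A φ, Sh (ψ:E)⟫_ℂ - ⟪(φ:E), Sh (A ψ)⟫_ℂ - I * ⟪(φ:E), Sh (Sh (ψ:E))⟫_ℂ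
      + I * ⟪(φ:E), (ψ:E)⟫_ℂ) + g 0 = 0 := by
    by_contra hne
    have hnorm := hgt.norm
    have hpos : 0 < ‖(⟪A φ, Sh (ψ:E)⟫_ℂ - ⟪(φ:E), Sh (A ψ)⟫_ℂ - I * ⟪(φ:E), Sh (Sh (ψ:E))⟫_ℂ
      + I * ⟪(φ:E), (ψ:E)⟫_ℂ) + g 0‖ := norm_pos_iff.mpr hne
    set Lv := ‖(⟪A φ, Sh (ψ:E)⟫_ℂ - ⟪(φ:E), Sh (A ψ)⟫_ℂ - I * ⟪(φ:E), Sh (Sh (ψ:E))⟫_ℂ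
      + I * ⟪(φ:E), (ψ:E)⟫_ℂ) + g 0‖ with hLv
    have hev := hnorm.eventually (eventually_ge_nhds (show Lv/2 < Lv by linarith))
    obtain ⟨N₀, hN₀⟩ := Filter.eventually_atTop.mp hev
    have key : ∀ n : ℕ, Lv/(2*((n:ℝ)+N₀)+1) ≤ ‖hs (n+N₀)‖ := by
      intro n
      have h1 := hN₀ (n+N₀) (Nat.le_add_left _ _)
      rw [hgn] at h1
      have hp : (0:ℝ) < 2*((n:ℝ)+N₀)+1 := by positivity
      rw [div_le_iff₀ hp]
      push_cast at h1 ⊢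
      nlinarith [norm_nonneg (hs (n+N₀))]
    have hsum1 : Summable (fun n => ‖hs (n+N₀)‖) := (summable_nat_add_iff N₀).mpr hsnorm
    have hsum2 : Summable (fun n : ℕ => Lv/(2*((n:ℝ)+N₀)+1)) :=
      Summable.of_nonneg_of_le (fun n => by positivity) key hsum1
    have hsum3 := hsum2.mul_left ((2*(N₀:ℝ)+3)/Lv)
    have hba : ∀ n : ℕ, (1:ℝ)/((n:ℝ)+1)
        ≤ ((2*(N₀:ℝ)+3)/Lv) * (Lv/(2*((n:ℝ)+N₀)+1)) := by
      intro n
      have hL' : Lv ≠ 0 := ne_of_gt hpos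
      have heq : ((2*(N₀:ℝ)+3)/Lv) * (Lv/(2*((n:ℝ)+N₀)+1))
          = (2*(N₀:ℝ)+3)/(2*((n:ℝ)+N₀)+1) := by
        field_simp
      rw [heq, div_le_div_iff₀ (by positivity) (by positivity)]
      have hn0 : (0:ℝ) ≤ (n:ℝ) := Nat.cast_nonneg n
      have hN0 : (0:ℝ) ≤ (N₀:ℝ) := Nat.cast_nonneg N₀
      nlinarith
    have hsum4 : Summable (fun n : ℕ => (1:ℝ)/((n:ℝ)+1)) :=
      Summable.of_nonneg_of_le (fun n => by positivity) hba hsum3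
    have hsum5 : Summable (fun n : ℕ => (1:ℝ)/(n:ℝ)) := by
      apply (summable_nat_add_iff 1).mp
      simpa using hsum4
    exact Real.not_summable_one_div_natCast hsum5
  -- value of g 0
  have hg0 : g 0 = I * (1/2) * (⟪(φ:E), e 0⟫_ℂ * ⟪e 0, (ψ:E)⟫_ℂ) := by
    rw [hgdef]
    simp only [hsdef]
    norm_num
  -- expand the right-hand side operator
  have hRHS : ⟪(φ:E), ((-Complex.I) •
      (-(Sh ∘L Sh) + 1 + ((1 : ℂ) / 2) • ((innerSL ℂ (e 0)).smulRight (e 0)))) (ψ:E)⟫_ℂ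
      = -I * (-(⟪(φ:E), Sh (Sh (ψ:E))⟫_ℂ) + ⟪(φ:E), (ψ:E)⟫_ℂ
        + (1/2) * (⟪e 0, (ψ:E)⟫_ℂ * ⟪(φ:E), e 0⟫_ℂ)) := by
    simp only [ContinuousLinearMap.smul_apply, ContinuousLinearMap.add_apply,
      ContinuousLinearMap.neg_apply, ContinuousLinearMap.one_apply,
      ContinuousLinearMap.comp_apply, ContinuousLinearMap.smulRight_apply,
      innerSL_apply_apply, inner_smul_right, inner_add_right, inner_neg_right]
    try ring
  rw [hRHS]
  rw [hg0] at hL0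
  linear_combination hL0
end main

/-- With `f = 2cos`, `T_f = S + S*` and `A_{f'}` the closure
of `(i/2)((S−S*)X + X(S−S*))`, the unilateral shift `S` belongs to `C¹(A_{f'})`
and `i·ad_{A_{f'}} S = −S² + I + ½|e₁⟩⟨e₁|`. -/
theorem stmt_15 (e : ℕ → E) (he : IsONBasis e)
    (Sh : E →L[ℂ] E) (hSh : ∀ n : ℕ, Sh (e n) = e (n + 1))
    (A : E →ₗ.[ℂ] E) (hA : IsAg e (fun θ => (-2 : ℂ) * Complex.ofReal (Real.sin θ)) A) :
    CommutatorOf A Sh ((-Complex.I) •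
      (-(Sh ∘L Sh) + 1 + ((1 : ℂ) / 2) • ((innerSL ℂ (e 0)).smulRight (e 0)))) := by
  obtain ⟨hsa, hmat⟩ := hA
  intro φ ψ
  exact stmt_15' e he Sh hSh A hsa hmat φ ψ
end
end

section
/- Let A be a self-adjoint operator on a Hilbert space H and φ, ψ unit vectors belonging to D(A^k) for some k ∈ ℕ. Then the rank-one operator |ψ⟩⟨φ| is of class C^k with respect to A, and ad_A^k(|ψ⟩⟨φ|) = ∑_{p=0}^{k} (−1)^{k−p} (k choose p) |A^p ψ⟩⟨A^{k−p} φ|. -/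
open scoped InnerProductSpace
open Complex

noncomputable section

variable {E : Type*} [NormedAddCommGroup E] [InnerProductSpace ℂ E] [CompleteSpace E]

/-- `∑_{p=0}^{j} (−1)^{j−p} C(j,p) |A^p ψ⟩⟨A^{j−p} φ|`, where `φs p = A^p φ`,
`ψs p = A^p ψ`; `(innerSL ℂ v).smulRight w` is `|w⟩⟨v| : x ↦ ⟨v,x⟩ w`. -/
def rankSum (φs ψs : ℕ → E) (j : ℕ) : E →L[ℂ] E :=
  ∑ p ∈ Finset.range (j + 1),
    (((-1 : ℂ)) ^ (j - p) * (Nat.choose j p : ℂ)) •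
      ((innerSL ℂ (φs (j - p))).smulRight (ψs p))

lemma sym_aux (A : E →ₗ.[ℂ] E) (hAsa : A.adjoint = A) (u w : A.domain) :
    ⟪A u, (w : E)⟫_ℂ = ⟪(u : E), A w⟫_ℂ := by
  by_cases hd : Dense (A.domain : Set E)
  · have h := LinearPMap.adjoint_isFormalAdjoint hd
    have hu : (u : E) ∈ A.adjoint.domain := by rw [hAsa]; exact u.2
    have h2 := h ⟨(u : E), hu⟩ w
    have h3 : A.adjoint ⟨(u : E), hu⟩ = A u := by
      rw [LinearPMap.apply_comp_inclusion (le_of_eq hAsa) ⟨(u : E), hu⟩]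
      congr
    rwa [h3] at h2
  · have hz : ∀ x : A.domain, A x = 0 := by
      intro x
      have hx : (x : E) ∈ A.adjoint.domain := by rw [hAsa]; exact x.2
      have h3 : A.adjoint ⟨(x : E), hx⟩ = A x := by
        rw [LinearPMap.apply_comp_inclusion (le_of_eq hAsa) ⟨(x : E), hx⟩]
        congr
      rw [← h3, LinearPMap.adjoint_apply_of_not_dense hd]
    rw [hz u, hz w, inner_zero_left, inner_zero_right]

lemma keyId (a b : ℕ → ℂ) (j : ℕ) :
    (∑ p ∈ Finset.range (j + 1), ((-1 : ℂ)) ^ (j - p) * (j.choose p : ℂ) * (a (j - p) * b (p + 1)))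
      - ∑ p ∈ Finset.range (j + 1), ((-1 : ℂ)) ^ (j - p) * (j.choose p : ℂ) * (a (j - p + 1) * b p)
    = ∑ p ∈ Finset.range (j + 2), ((-1 : ℂ)) ^ (j + 1 - p) * ((j + 1).choose p : ℂ) * (a (j + 1 - p) * b p) := by
  rw [Finset.sum_range_succ' (fun p => ((-1 : ℂ)) ^ (j + 1 - p) * ((j + 1).choose p : ℂ) * (a (j + 1 - p) * b p)) (j + 1)]
  have e1 : ∀ p ∈ Finset.range (j + 1),
      ((-1 : ℂ)) ^ (j + 1 - (p + 1)) * ((j + 1).choose (p + 1) : ℂ) * (a (j + 1 - (p + 1)) * b (p + 1))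
      = ((-1 : ℂ)) ^ (j - p) * (j.choose p : ℂ) * (a (j - p) * b (p + 1))
        + ((-1 : ℂ)) ^ (j - p) * (j.choose (p + 1) : ℂ) * (a (j - p) * b (p + 1)) := by
    intro p hp
    have h1 : j + 1 - (p + 1) = j - p := by omega
    rw [h1, Nat.choose_succ_succ, Nat.cast_add]
    ring
  rw [Finset.sum_congr rfl e1, Finset.sum_add_distrib]
  have e2 : (∑ p ∈ Finset.range (j + 1), ((-1 : ℂ)) ^ (j - p) * (j.choose (p + 1) : ℂ) * (a (j - p) * b (p + 1)))
      + ((-1 : ℂ)) ^ (j + 1 - 0) * ((j + 1).choose 0 : ℂ) * (a (j + 1 - 0) * b 0)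
      = - ∑ p ∈ Finset.range (j + 1), ((-1 : ℂ)) ^ (j - p) * (j.choose p : ℂ) * (a (j - p + 1) * b p) := by
    rw [Finset.sum_range_succ (fun p => ((-1 : ℂ)) ^ (j - p) * (j.choose (p + 1) : ℂ) * (a (j - p) * b (p + 1))) j]
    rw [Finset.sum_range_succ' (fun p => ((-1 : ℂ)) ^ (j - p) * (j.choose p : ℂ) * (a (j - p + 1) * b p)) j]
    simp only [Nat.choose_succ_self, Nat.cast_zero, Nat.sub_self, Nat.choose_zero_right, Nat.cast_one]
    have e3 : ∀ p ∈ Finset.range j,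
        ((-1 : ℂ)) ^ (j - p) * (j.choose (p + 1) : ℂ) * (a (j - p) * b (p + 1))
        = - (((-1 : ℂ)) ^ (j - (p + 1)) * (j.choose (p + 1) : ℂ) * (a (j - (p + 1) + 1) * b (p + 1))) := by
      intro p hp
      simp only [Finset.mem_range] at hp
      have h1 : j - p = (j - (p + 1)) + 1 := by omega
      have h2 : j - (p + 1) + 1 = j - p := by omega
      rw [h1, pow_succ]
      rw [h2]
      ring
    rw [Finset.sum_congr rfl e3, Finset.sum_neg_distrib]
    simp only [Nat.sub_zero, pow_succ]
    ring
  rw [add_assoc, e2]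
  ring

/-- If `φ, ψ` are unit vectors in `D(A^k)`, then the
rank-one operator `|ψ⟩⟨φ|` is of class `C^k(A)` and
`ad_A^k |ψ⟩⟨φ| = ∑_{p=0}^{k} (−1)^{k−p} C(k,p) |A^p ψ⟩⟨A^{k−p} φ|`. -/
theorem stmt_16 (A : E →ₗ.[ℂ] E) (hAsa : A.adjoint = A)
    (k : ℕ) (φ ψ : E) (hφn : ‖φ‖ = 1) (hψn : ‖ψ‖ = 1)
    (φs ψs : ℕ → E) (hφ0 : φs 0 = φ) (hψ0 : ψs 0 = ψ)
    (hφs : ∀ j < k, ∃ h : φs j ∈ A.domain, A ⟨φs j, h⟩ = φs (j + 1))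
    (hψs : ∀ j < k, ∃ h : ψs j ∈ A.domain, A ⟨ψs j, h⟩ = ψs (j + 1)) :
    ∀ j < k, CommutatorOf A (rankSum φs ψs j) (rankSum φs ψs (j + 1)) := by
  intro j hj u v
  have hb : ∀ p, p ≤ j → ⟪A u, ψs p⟫_ℂ = ⟪(u : E), ψs (p + 1)⟫_ℂ := by
    intro p hp
    obtain ⟨h, he⟩ := hψs p (lt_of_le_of_lt hp hj)
    have h2 := sym_aux A hAsa u ⟨ψs p, h⟩
    rwa [he] at h2
  have ha : ∀ p, p ≤ j → ⟪φs p, A v⟫_ℂ = ⟪φs (p + 1), (v : E)⟫_ℂ := by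
    intro p hp
    obtain ⟨h, he⟩ := hφs p (lt_of_le_of_lt hp hj)
    have h2 := sym_aux A hAsa v ⟨φs p, h⟩
    rw [he] at h2
    calc ⟪φs p, A v⟫_ℂ = starRingEnd ℂ ⟪A v, φs p⟫_ℂ := (inner_conj_symm _ _).symm
      _ = starRingEnd ℂ ⟪(v : E), φs (p + 1)⟫_ℂ := by rw [h2]
      _ = ⟪φs (p + 1), (v : E)⟫_ℂ := inner_conj_symm _ _
  simp only [rankSum, ContinuousLinearMap.coe_sum', Finset.sum_apply,
    ContinuousLinearMap.coe_smul', Pi.smul_apply, ContinuousLinearMap.smulRight_apply,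
    innerSL_apply_apply, inner_sum, inner_smul_right]
  have e1 : ∀ p ∈ Finset.range (j + 1),
      ((-1 : ℂ)) ^ (j - p) * (j.choose p : ℂ) * (⟪φs (j - p), (v : E)⟫_ℂ * ⟪A u, ψs p⟫_ℂ)
      = ((-1 : ℂ)) ^ (j - p) * (j.choose p : ℂ)
          * (⟪φs (j - p), (v : E)⟫_ℂ * ⟪(u : E), ψs (p + 1)⟫_ℂ) := by
    intro p hp
    simp only [Finset.mem_range] at hp
    rw [hb p (by omega)]
  have e2 : ∀ p ∈ Finset.range (j + 1),
      ((-1 : ℂ)) ^ (j - p) * (j.choose p : ℂ) * (⟪φs (j - p), A v⟫_ℂ * ⟪(u : E), ψs p⟫_ℂ)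
      = ((-1 : ℂ)) ^ (j - p) * (j.choose p : ℂ)
          * (⟪φs (j - p + 1), (v : E)⟫_ℂ * ⟪(u : E), ψs p⟫_ℂ) := by
    intro p hp
    simp only [Finset.mem_range] at hp
    rw [ha (j - p) (by omega)]
  rw [Finset.sum_congr rfl e1, Finset.sum_congr rfl e2]
  exact keyId (fun q => ⟪φs q, (v : E)⟫_ℂ) (fun q => ⟪(u : E), ψs q⟫_ℂ) j
end
end
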